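/- An increasing function f : ℕ → ℕ is nice if and only if it is not universally bounded above. -/

import Mathlib

/-- A function `f : ℕ → ℕ` is *nice* if for every `T > 0` there exist `m ≥ 2` and
sequences `(k_i)_{i=1}^m`, `(a_i)_{i=1}^m` of natural numbers with
`k_1 ≤ ⋯ ≤ k_m`, `T < a_1 < ⋯ < a_m`, `a_{i+1} ≥ a_i + k_i + 1` and `a_i ≤ f(k_i)`. -/
def Nice (f : ℕ → ℕ) : Prop :=
  ∀ T : ℕ, 0 < T → ∃ m : ℕ, 2 ≤ m ∧ ∃ k a : ℕ → ℕ,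
    (∀ i j, 1 ≤ i → i ≤ j → j ≤ m → k i ≤ k j) ∧
    (T < a 1) ∧
    (∀ i, 1 ≤ i → i < m → a i < a (i + 1)) ∧
    (∀ i, 1 ≤ i → i < m → a i + k i + 1 ≤ a (i + 1)) ∧
    (∀ i, 1 ≤ i → i ≤ m → a i ≤ f (k i))

/-- An increasing function `f : ℕ → ℕ` is nice if and only if it is not
universally bounded above. -/
theorem nice_iff_unbounded (f : ℕ → ℕ) (hf : Monotone f) :
    Nice f ↔ ¬ ∃ M : ℕ, ∀ n : ℕ, f n ≤ M := by
  constructor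
  · rintro hN ⟨M, hM⟩
    obtain ⟨m, hm, k, a, hk, ha1, _, _, hle⟩ := hN (M + 1) (by omega)
    have h1 := hle 1 le_rfl (by omega)
    have h2 := hM (k 1)
    omega
  · intro hub T hT
    push_neg at hub
    obtain ⟨n1, h1⟩ := hub T
    obtain ⟨n2, h2⟩ := hub (T + n1 + 1)
    have hmax : f n2 ≤ f (max n1 n2) := hf (le_max_right _ _)
    have hmax1 : f n1 ≤ f (max n1 n2) := hf (le_max_left _ _)
    refine ⟨2, le_rfl, fun i => if i ≤ 1 then n1 else max n1 n2,
      fun i => if i ≤ 1 then T + 1 else T + n1 + 2, ?_, ?_, ?_, ?_, ?_⟩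
    · intro i j hi hij hj
      simp only
      split_ifs with h h' h'
      · exact le_rfl
      · exact le_max_left _ _
      · omega
      · exact le_rfl
    · simp
    · intro i hi him
      have : i = 1 := by omega
      subst this
      simp
    · intro i hi him
      have : i = 1 := by omega
      subst this
      simp
      omega
    · intro i hi him
      simp only
      split_ifs with h
      · omega
      · omega
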